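/- Let f : ℝ^d → V be a bounded function into a Banach space and L ∈ V such that for each sign pattern s ∈ {+,−}^d, the uniform averages (1/w(b−a)) ∫_a^b f(x) dx converge to L as l(b−a) → ∞ with both a and b lying in the orthant ℝ^d_s. Then (1/w(b−a)) ∫_a^b f(x) dx → L as l(b−a) → ∞ over all a ≤ b in ℝ^d. -/

import Mathlib

open MeasureTheory Filter Topology

/-- The orthant of `ℝ^d` determined by a sign pattern `s : Fin d → Bool`
(`true` means the nonnegative half-line, `false` the nonpositive one). -/
def orthant {d : ℕ} (s : Fin d → Bool) : Set (Fin d → ℝ) :=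
  {x | ∀ i, if s i then 0 ≤ x i else x i ≤ 0}

/-- Corner of the box `[a,b]` clipped to the orthant `s`, applied to the endpoint `a`. -/
def pc {d : ℕ} (s : Fin d → Bool) (a : Fin d → ℝ) : Fin d → ℝ :=
  fun i => if s i then max (a i) 0 else min (a i) 0

lemma pc_mem_orthant {d : ℕ} (s : Fin d → Bool) (a : Fin d → ℝ) :
    pc s a ∈ orthant s := by
  intro i
  cases hsi : s i <;> simp [pc, hsi, le_max_right, min_le_right]

lemma pc_mono {d : ℕ} (s : Fin d → Bool) {a b : Fin d → ℝ} (hab : a ≤ b) :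
    pc s a ≤ pc s b := by
  intro i
  cases hsi : s i <;> simp only [pc, hsi, if_pos, if_neg Bool.false_ne_true]
  · exact min_le_min (hab i) le_rfl
  · exact max_le_max (hab i) le_rfl

lemma pc_len_le {d : ℕ} (s : Fin d → Bool) {a b : Fin d → ℝ} (hab : a ≤ b) (i : Fin d) :
    pc s b i - pc s a i ≤ b i - a i := by
  cases hsi : s i <;> simp only [pc, hsi, if_pos, if_neg Bool.false_ne_true]
  · rcases le_total (b i) 0 with h | h
    · rw [min_eq_left h, min_eq_left (le_trans (hab i) h)]
    · rw [min_eq_right h]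
      rcases le_total (a i) 0 with h' | h'
      · rw [min_eq_left h']; linarith
      · rw [min_eq_right h']; linarith [hab i]
  · rcases le_total 0 (a i) with h | h
    · rw [max_eq_left h, max_eq_left (le_trans h (hab i))]
    · rw [max_eq_right h]
      rcases le_total 0 (b i) with h' | h'
      · rw [max_eq_left h']; linarith
      · rw [max_eq_right h']; linarith [hab i]

lemma hyperplane_null {d : ℕ} (i : Fin d) :
    (volume : Measure (Fin d → ℝ)) {x | x i = 0} = 0 := by
  rw [show (volume : Measure (Fin d → ℝ)) = Measure.pi fun _ => volume from rfl]
  exact Measure.pi_hyperplane _ i 0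

lemma split_integral {V : Type*} [NormedAddCommGroup V] [NormedSpace ℝ V]
    [CompleteSpace V]
    {d : ℕ} (g : (Fin d → ℝ) → V) (hg : StronglyMeasurable g)
    (C : ℝ) (hC : ∀ x, ‖g x‖ ≤ C) (a b : Fin d → ℝ) :
    ∫ x in Set.Icc a b, g x = ∑ s : Fin d → Bool,
      ∫ x in Set.Icc (pc s a) (pc s b), g x := by
  classical
  set P : (Fin d → Bool) → Set (Fin d → ℝ) :=
    fun s => Set.Icc a b ∩ {x | ∀ i, s i = decide (0 ≤ x i)} with hPdef
  have hPm : ∀ s, MeasurableSet (P s) := by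
    intro s
    apply measurableSet_Icc.inter
    have : {x : Fin d → ℝ | ∀ i, s i = decide (0 ≤ x i)} =
        ⋂ i, {x : Fin d → ℝ | s i = decide (0 ≤ x i)} := by
      ext x; simp [Set.mem_iInter]
    rw [this]
    refine MeasurableSet.iInter fun i => ?_
    have hm : Measurable fun x : Fin d → ℝ => x i := measurable_pi_apply i
    cases hsi : s i with
    | true =>
      have h2 : {x : Fin d → ℝ | (true : Bool) = decide (0 ≤ x i)} = {x | 0 ≤ x i} := by
        ext x; simp [eq_comm]
      rw [h2]; exact measurableSet_le measurable_const hm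
    | false =>
      have h2 : {x : Fin d → ℝ | (false : Bool) = decide (0 ≤ x i)} = {x | x i < 0} := by
        ext x; simp [eq_comm, not_le]
      rw [h2]; exact measurableSet_lt hm measurable_const
  have hunion : ⋃ s, P s = Set.Icc a b := by
    apply Set.Subset.antisymm
    · exact Set.iUnion_subset fun s => Set.inter_subset_left
    · intro x hx
      exact Set.mem_iUnion.2 ⟨fun i => decide (0 ≤ x i), hx, fun i => rfl⟩
  have hdisj : Pairwise (Function.onFun Disjoint P) := by
    intro s t hst
    rw [Function.onFun, Set.disjoint_left]
    rintro x ⟨_, hx1⟩ ⟨_, hx2⟩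
    exact hst (funext fun i => (hx1 i).trans (hx2 i).symm)
  have hint : IntegrableOn g (Set.Icc a b) := by
    refine Integrable.mono' (integrableOn_const measure_Icc_lt_top.ne)
      hg.aestronglyMeasurable.restrict (Filter.Eventually.of_forall hC)
  have hnull : (volume : Measure (Fin d → ℝ)) (⋃ i, {x | x i = 0}) = 0 :=
    measure_iUnion_null fun i => hyperplane_null i
  have key : ∀ s : Fin d → Bool, P s =ᵐ[volume] Set.Icc (pc s a) (pc s b) := by
    intro s
    have hsub1 : P s ⊆ Set.Icc (pc s a) (pc s b) := by
      rintro x ⟨hx, hxs⟩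
      constructor <;> intro i
      · have := hxs i
        cases hsi : s i with
        | true =>
          rw [hsi] at this
          have h0 : 0 ≤ x i := of_decide_eq_true this.symm
          simp only [pc, hsi, if_pos]
          exact max_le (hx.1 i) h0
        | false =>
          simp only [pc, hsi, if_neg Bool.false_ne_true]
          exact le_trans (min_le_left _ _) (hx.1 i)
      · have := hxs i
        cases hsi : s i with
        | true =>
          simp only [pc, hsi, if_pos]
          exact le_trans (hx.2 i) (le_max_left _ _)
        | false =>
          rw [hsi] at this
          have h0 : ¬ (0 ≤ x i) := of_decide_eq_false this.symm
          simp only [pc, hsi, if_neg Bool.false_ne_true]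
          exact le_min (hx.2 i) (le_of_not_ge h0)
    have hsub2 : Set.Icc (pc s a) (pc s b) \ P s ⊆ ⋃ i, {x : Fin d → ℝ | x i = 0} := by
      rintro x ⟨hx, hxP⟩
      by_contra hne
      simp only [Set.mem_iUnion, Set.mem_setOf_eq, not_exists] at hne
      apply hxP
      have hmain : ∀ i, (a i ≤ x i ∧ x i ≤ b i) ∧ s i = decide (0 ≤ x i) := by
        intro i
        have h1 := hx.1 i
        have h2 := hx.2 i
        cases hsi : s i with
        | true =>
          simp only [pc, hsi, if_pos] at h1 h2
          have h0 : 0 ≤ x i := le_trans (le_max_right _ _) h1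
          have hxb : x i ≤ b i := by
            rcases le_or_gt 0 (b i) with hb | hb
            · rwa [max_eq_left hb] at h2
            · exfalso
              rw [max_eq_right hb.le] at h2
              exact hne i (le_antisymm h2 h0)
          exact ⟨⟨le_trans (le_max_left _ _) h1, hxb⟩, (decide_eq_true h0).symm⟩
        | false =>
          simp only [pc, hsi, if_neg Bool.false_ne_true] at h1 h2
          have hx0 : x i ≤ 0 := le_trans h2 (min_le_right _ _)
          have hxlt : x i < 0 := lt_of_le_of_ne hx0 (hne i)
          have hxa : a i ≤ x i := by
            rcases le_or_gt (a i) 0 with ha | ha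
            · rwa [min_eq_left ha] at h1
            · exfalso
              rw [min_eq_right ha.le] at h1
              exact absurd (lt_of_le_of_lt h1 hxlt) (lt_irrefl 0)
          exact ⟨⟨hxa, le_trans h2 (min_le_left _ _)⟩,
            (decide_eq_false (not_le.2 hxlt)).symm⟩
      exact ⟨⟨fun i => (hmain i).1.1, fun i => (hmain i).1.2⟩, fun i => (hmain i).2⟩
    rw [MeasureTheory.ae_eq_set]
    constructor
    · rw [Set.diff_eq_empty.2 hsub1]; exact measure_empty
    · exact measure_mono_null hsub2 hnull
  calc ∫ x in Set.Icc a b, g x = ∫ x in ⋃ s, P s, g x := by rw [hunion]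
    _ = ∑' s, ∫ x in P s, g x := integral_iUnion hPm hdisj (hunion ▸ hint)
    _ = ∑ s : Fin d → Bool, ∫ x in P s, g x := tsum_fintype _
    _ = _ := Finset.sum_congr rfl fun s _ => setIntegral_congr_set (key s)


theorem stmt15 {V : Type*} [NormedAddCommGroup V] [NormedSpace ℝ V]
    [CompleteSpace V] [SecondCountableTopology V]
    {d : ℕ} (f : (Fin d → ℝ) → V) (hmeas : StronglyMeasurable f)
    (M : ℝ) (hbd : ∀ x, ‖f x‖ ≤ M)
    (L : V)
    (hs : ∀ s : Fin d → Bool, ∀ ε > (0:ℝ), ∃ B : ℝ,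
      ∀ a b : Fin d → ℝ, a ∈ orthant s → b ∈ orthant s → a ≤ b →
        (∀ i, B < b i - a i) →
        ‖(∏ i, (b i - a i))⁻¹ • ∫ x in Set.Icc a b, f x - L‖ < ε) :
    ∀ ε > (0:ℝ), ∃ B : ℝ, ∀ a b : Fin d → ℝ, a ≤ b → (∀ i, B < b i - a i) →
      ‖(∏ i, (b i - a i))⁻¹ • ∫ x in Set.Icc a b, f x - L‖ < ε := by
  classical
  intro ε hε
  set g : (Fin d → ℝ) → V := fun x => f x - L with hg
  have hgmeas : StronglyMeasurable g := hmeas.sub stronglyMeasurable_const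
  set C : ℝ := M + ‖L‖ with hCdef
  have hC : ∀ x, ‖g x‖ ≤ C := fun x => (norm_sub_le _ _).trans (add_le_add_left (hbd x) _)
  have hC0 : 0 ≤ C := le_trans (norm_nonneg _) (hC (fun _ => 0))
  set N : ℕ := Fintype.card (Fin d → Bool) with hN
  have hNpos : (0:ℝ) < N := by exact_mod_cast Fintype.card_pos
  set ε₁ : ℝ := ε / (2 * N) with hε₁def
  have hε₁ : 0 < ε₁ := div_pos hε (by positivity)
  choose Bs hBs using fun s : Fin d → Bool => hs s ε₁ hε₁
  set B1 : ℝ := max (Finset.univ.sup' Finset.univ_nonempty Bs) 0 with hB1def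
  have hB10 : 0 ≤ B1 := le_max_right _ _
  have hB1 : ∀ s, Bs s ≤ B1 :=
    fun s => le_max_of_le_left (Finset.le_sup' Bs (Finset.mem_univ s))
  refine ⟨max 1 (2 * N * C * B1 / ε), ?_⟩
  intro a b hab hT
  have hTpos : ∀ i, 0 < b i - a i :=
    fun i => lt_of_lt_of_le one_pos (le_trans (le_max_left _ _) (hT i).le)
  set w : ℝ := ∏ i, (b i - a i) with hw
  have hwpos : 0 < w := Finset.prod_pos fun i _ => hTpos i
  have hlen0 : ∀ (s : Fin d → Bool) i, 0 ≤ pc s b i - pc s a i :=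
    fun s i => sub_nonneg.2 (pc_mono s hab i)
  -- the per-orthant bound
  have hterm : ∀ s : Fin d → Bool,
      w⁻¹ * ‖∫ x in Set.Icc (pc s a) (pc s b), g x‖ < ε₁ := by
    intro s
    set I := ∫ x in Set.Icc (pc s a) (pc s b), g x with hI
    set ws : ℝ := ∏ i, (pc s b i - pc s a i) with hws
    have hws0 : 0 ≤ ws := Finset.prod_nonneg fun i _ => hlen0 s i
    have hwsle : ws ≤ w :=
      Finset.prod_le_prod (fun i _ => hlen0 s i) (fun i _ => pc_len_le s hab i)
    have hInorm : ‖I‖ ≤ C * ws := by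
      have h := norm_setIntegral_le_of_norm_le_const (μ := volume)
        (s := Set.Icc (pc s a) (pc s b)) measure_Icc_lt_top
        (fun x _ => hC x)
      rwa [measureReal_def, Real.volume_Icc_pi_toReal (pc_mono s hab)] at h
    by_cases hgood : ∀ i, B1 < pc s b i - pc s a i
    · have hwspos : 0 < ws :=
        Finset.prod_pos fun i _ => lt_of_le_of_lt hB10 (hgood i)
      have h := hBs s (pc s a) (pc s b) (pc_mem_orthant s a) (pc_mem_orthant s b)
        (pc_mono s hab) (fun i => lt_of_le_of_lt (hB1 s) (hgood i))
      rw [← hws, norm_smul, Real.norm_eq_abs,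
        abs_of_pos (inv_pos.2 hwspos)] at h
      calc w⁻¹ * ‖I‖ ≤ ws⁻¹ * ‖I‖ :=
            mul_le_mul_of_nonneg_right (inv_anti₀ hwspos hwsle) (norm_nonneg _)
        _ < ε₁ := h
    · push_neg at hgood
      obtain ⟨i, hi⟩ := hgood
      set Q : ℝ := ∏ j ∈ Finset.univ.erase i, (b j - a j) with hQ
      have hQpos : 0 < Q := Finset.prod_pos fun j _ => hTpos j
      have hwQ : w = (b i - a i) * Q :=
        (Finset.mul_prod_erase Finset.univ _ (Finset.mem_univ i)).symm
      have hwsle2 : ws ≤ B1 * Q := by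
        rw [hws, ← Finset.mul_prod_erase Finset.univ _ (Finset.mem_univ i)]
        refine mul_le_mul hi (Finset.prod_le_prod (fun j _ => hlen0 s j)
          (fun j _ => pc_len_le s hab j)) (Finset.prod_nonneg fun j _ => hlen0 s j) hB10
      have hIle : ‖I‖ ≤ C * (B1 * Q) :=
        hInorm.trans (mul_le_mul_of_nonneg_left hwsle2 hC0)
      have hQne : Q ≠ 0 := hQpos.ne'
      have hTne : (b i - a i) ≠ 0 := (hTpos i).ne'
      have heq : w⁻¹ * (C * (B1 * Q)) = C * B1 / (b i - a i) := by
        rw [hwQ]; field_simp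
      have hTB : 2 * N * C * B1 / ε < b i - a i :=
        lt_of_le_of_lt (le_max_right _ _) (hT i)
      have h2 : C * B1 * (2 * N) < ε * (b i - a i) := by
        have h3 := (div_lt_iff₀ hε).1 hTB
        nlinarith
      have hfin : C * B1 / (b i - a i) < ε₁ := by
        rw [hε₁def, div_lt_div_iff₀ (hTpos i) (by positivity)]
        exact h2
      calc w⁻¹ * ‖I‖ ≤ w⁻¹ * (C * (B1 * Q)) :=
            mul_le_mul_of_nonneg_left hIle (inv_nonneg.2 hwpos.le)
        _ = C * B1 / (b i - a i) := heq
        _ < ε₁ := hfin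
  calc ‖w⁻¹ • ∫ x in Set.Icc a b, g x‖
      = w⁻¹ * ‖∫ x in Set.Icc a b, g x‖ := by
        rw [norm_smul, Real.norm_eq_abs, abs_of_pos (inv_pos.2 hwpos)]
    _ = w⁻¹ * ‖∑ s : Fin d → Bool, ∫ x in Set.Icc (pc s a) (pc s b), g x‖ := by
        rw [split_integral g hgmeas C hC a b]
    _ ≤ w⁻¹ * ∑ s : Fin d → Bool, ‖∫ x in Set.Icc (pc s a) (pc s b), g x‖ :=
        mul_le_mul_of_nonneg_left (norm_sum_le _ _) (inv_nonneg.2 hwpos.le)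
    _ = ∑ s : Fin d → Bool, w⁻¹ * ‖∫ x in Set.Icc (pc s a) (pc s b), g x‖ :=
        Finset.mul_sum _ _ _
    _ < ∑ _s : Fin d → Bool, ε₁ :=
        Finset.sum_lt_sum_of_nonempty Finset.univ_nonempty (fun s _ => hterm s)
    _ = N * ε₁ := by rw [Finset.sum_const, Finset.card_univ, nsmul_eq_mul, hN]
    _ = ε / 2 := by
        rw [hε₁def]; field_simp
    _ < ε := div_lt_self hε one_lt_two
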